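/- Suppose U ⊆ C[a,b] satisfies F(U) ⊆ U, and there exists K ≥ 0 such that ‖f(X) − f(Y)‖_{C[a,t]} ≤ K ‖X − Y‖_{C[a,t]} for all X, Y ∈ U and all t ∈ [a,b]. Then for every n ≥ 1, all X, Y ∈ U and all t ∈ [a,b], the n-fold iterate of F satisfies ‖Fⁿ(X) − Fⁿ(Y)‖_{C[a,t]} ≤ (Kⁿ (t − a)ⁿ / n!) · ‖X − Y‖_{C[a,t]}. -/

import Mathlib

open MeasureTheory Filter Set Topology

noncomputable section

namespace Volterra

/-- A map `f : C[a,b] → C[a,b]` is *retarded* if, whenever two functions agree on `[a,t]`,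
their images under `f` agree on `[a,t]`. -/
def Retarded (a b : ℝ) (f : C(Set.Icc a b, ℝ) → C(Set.Icc a b, ℝ)) : Prop :=
  ∀ X Y : C(Set.Icc a b, ℝ), ∀ t ∈ Set.Icc a b,
    (∀ s : Set.Icc a b, (s : ℝ) ≤ t → X s = Y s) →
      ∀ s : Set.Icc a b, (s : ℝ) ≤ t → f X s = f Y s

/-- The Volterra-type map `F(X)(t) = F₀(t) + ∫_a^t f(X)(s) ds` on `C[a,b]`. -/
def Fmap (a b : ℝ) (hab : a ≤ b) (F0 : C(Set.Icc a b, ℝ))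
    (f : C(Set.Icc a b, ℝ) → C(Set.Icc a b, ℝ)) (X : C(Set.Icc a b, ℝ)) :
    C(Set.Icc a b, ℝ) :=
  ⟨fun t => F0 t + ∫ s in a..(t : ℝ), Set.IccExtend hab ⇑(f X) s, by
    refine F0.continuous.add ?_
    have hg : Continuous (Set.IccExtend hab ⇑(f X)) := (f X).continuous.Icc_extend'
    exact (intervalIntegral.continuous_primitive (fun c d => hg.intervalIntegrable c d) a).comp
      continuous_subtype_val⟩

/-- Restriction of a continuous function on `[a,b]` to `[a,t]` (using the continuous
extension to `ℝ`, which agrees with the original function on `[a,b]`). -/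
def restrictTo (a b t : ℝ) (hab : a ≤ b) (X : C(Set.Icc a b, ℝ)) : C(Set.Icc a t, ℝ) :=
  ⟨fun s => Set.IccExtend hab ⇑X s, (X.continuous.Icc_extend').comp continuous_subtype_val⟩

/-- The sup norm `‖X‖_{C[a,t]}` of `X ∈ C[a,b]` over the part of `[a,b]` with `s ≤ t`. -/
def normOn (a b t : ℝ) (X : C(Set.Icc a b, ℝ)) : ℝ :=
  sSup {r : ℝ | ∃ s : Set.Icc a b, (s : ℝ) ≤ t ∧ r = |X s|}

end Volterra

namespace Volterra

section Helpers

variable {a b : ℝ}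

lemma normOn_bddAbove (t : ℝ) (X : C(Set.Icc a b, ℝ)) :
    BddAbove {r : ℝ | ∃ s : Set.Icc a b, (s : ℝ) ≤ t ∧ r = |X s|} := by
  refine ⟨‖X‖, ?_⟩
  rintro r ⟨s, hs, rfl⟩
  simpa [Real.norm_eq_abs] using X.norm_coe_le_norm s

lemma abs_le_normOn {t : ℝ} (X : C(Set.Icc a b, ℝ))
    {s : Set.Icc a b} (hs : (s : ℝ) ≤ t) : |X s| ≤ normOn a b t X :=
  le_csSup (normOn_bddAbove t X) ⟨s, hs, rfl⟩

lemma normOn_le (hab : a ≤ b) {t M : ℝ} (hat : a ≤ t) (X : C(Set.Icc a b, ℝ))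
    (h : ∀ s : Set.Icc a b, (s : ℝ) ≤ t → |X s| ≤ M) : normOn a b t X ≤ M := by
  refine csSup_le ⟨|X ⟨a, le_refl a, hab⟩|, ⟨⟨a, le_refl a, hab⟩, hat, rfl⟩⟩ ?_
  rintro r ⟨s, hs, rfl⟩; exact h s hs

lemma normOn_nonneg (hab : a ≤ b) {t : ℝ} (hat : a ≤ t) (X : C(Set.Icc a b, ℝ)) :
    0 ≤ normOn a b t X :=
  le_trans (abs_nonneg _) (abs_le_normOn X (s := ⟨a, le_refl a, hab⟩) hat)

lemma normOn_mono (hab : a ≤ b) {u t : ℝ} (hat : a ≤ u) (hut : u ≤ t)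
    (X : C(Set.Icc a b, ℝ)) : normOn a b u X ≤ normOn a b t X := by
  refine csSup_le_csSup (normOn_bddAbove t X)
    ⟨|X ⟨a, le_refl a, hab⟩|, ⟨⟨a, le_refl a, hab⟩, hat, rfl⟩⟩ ?_
  rintro r ⟨s, hs, rfl⟩; exact ⟨s, hs.trans hut, rfl⟩

end Helpers

/-- **Iterated Lipschitz estimate for the Volterra map.**
If `F(U) ⊆ U` and `f` satisfies the retarded Lipschitz estimate
`‖f(X) − f(Y)‖_{C[a,t]} ≤ K ‖X − Y‖_{C[a,t]}` on `U`, then for every `n ≥ 1`, `X, Y ∈ U` and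
`t ∈ [a,b]` the `n`-fold iterate satisfies
`‖Fⁿ(X) − Fⁿ(Y)‖_{C[a,t]} ≤ Kⁿ (t−a)ⁿ / n! ⬝ ‖X − Y‖_{C[a,t]}`. -/
theorem iterate_estimate
    (a b : ℝ) (hab : a < b) (F0 : C(Set.Icc a b, ℝ))
    (f : C(Set.Icc a b, ℝ) → C(Set.Icc a b, ℝ)) (hf : Retarded a b f)
    (U : Set C(Set.Icc a b, ℝ))
    (hinv : Set.MapsTo (Fmap a b hab.le F0 f) U U)
    (K : ℝ) (hK : 0 ≤ K)
    (hLip : ∀ X ∈ U, ∀ Y ∈ U, ∀ t ∈ Set.Icc a b,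
      normOn a b t (f X - f Y) ≤ K * normOn a b t (X - Y)) :
    ∀ n : ℕ, 1 ≤ n → ∀ X ∈ U, ∀ Y ∈ U, ∀ t ∈ Set.Icc a b,
      normOn a b t ((Fmap a b hab.le F0 f)^[n] X - (Fmap a b hab.le F0 f)^[n] Y)
        ≤ K ^ n * (t - a) ^ n / (n.factorial : ℝ) * normOn a b t (X - Y) := by
  set G := Fmap a b hab.le F0 f with hG
  have key : ∀ n : ℕ, ∀ X ∈ U, ∀ Y ∈ U, ∀ t ∈ Set.Icc a b, ∀ s : Set.Icc a b,
      (s : ℝ) ≤ t →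
      |(G^[n] X - G^[n] Y) s| ≤ K ^ n * ((s : ℝ) - a) ^ n / (n.factorial : ℝ)
        * normOn a b t (X - Y) := by
    intro n
    induction n with
    | zero =>
      intro X hX Y hY t ht s hs
      simpa using abs_le_normOn (X - Y) hs
    | succ n ih =>
      intro X hX Y hY t ht s hs
      have hA : G^[n] X ∈ U := hinv.iterate n hX
      have hB : G^[n] Y ∈ U := hinv.iterate n hY
      set A := G^[n] X with hAdef
      set B := G^[n] Y with hBdef
      have hNt : 0 ≤ normOn a b t (X - Y) := normOn_nonneg hab.le ht.1 (X - Y)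
      set Nv := normOn a b t (X - Y) with hNv
      have hsb : (s : ℝ) ≤ b := s.2.2
      have has : a ≤ (s : ℝ) := s.2.1
      have hc1 : Continuous (Set.IccExtend hab.le ⇑(f A)) := (f A).continuous.Icc_extend'
      have hc2 : Continuous (Set.IccExtend hab.le ⇑(f B)) := (f B).continuous.Icc_extend'
      have hI1 : IntervalIntegrable (Set.IccExtend hab.le ⇑(f A)) volume a s :=
        hc1.intervalIntegrable a s
      have hI2 : IntervalIntegrable (Set.IccExtend hab.le ⇑(f B)) volume a s :=
        hc2.intervalIntegrable a s
      have hdiff : (G^[n+1] X - G^[n+1] Y) s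
          = ∫ u in a..(s : ℝ),
              (Set.IccExtend hab.le ⇑(f A) u - Set.IccExtend hab.le ⇑(f B) u) := by
        rw [Function.iterate_succ_apply', Function.iterate_succ_apply', ← hAdef, ← hBdef]
        simp only [ContinuousMap.sub_apply, hG, Fmap, ContinuousMap.coe_mk]
        rw [intervalIntegral.integral_sub hI1 hI2]
        ring
      -- pointwise bound of the integrand
      have hbound : ∀ u ∈ Set.Icc a (s : ℝ),
          |Set.IccExtend hab.le ⇑(f A) u - Set.IccExtend hab.le ⇑(f B) u|
            ≤ (K ^ (n+1) / (n.factorial : ℝ) * Nv) * (u - a) ^ n := by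
        intro u hu
        have hu_ab : u ∈ Set.Icc a b := ⟨hu.1, hu.2.trans hsb⟩
        rw [Set.IccExtend_of_mem _ _ hu_ab, Set.IccExtend_of_mem _ _ hu_ab]
        have h1 : |(f A - f B) ⟨u, hu_ab⟩| ≤ normOn a b u (f A - f B) :=
          abs_le_normOn _ (le_refl u)
        have h2 := hLip A hA B hB u hu_ab
        have h3 : normOn a b u (A - B)
            ≤ K ^ n * (u - a) ^ n / (n.factorial : ℝ) * Nv := by
          refine normOn_le hab.le hu.1 _ ?_
          intro s' hs'
          have hmon : normOn a b u (X - Y) ≤ Nv :=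
            normOn_mono hab.le hu.1 (hu.2.trans hs) (X - Y)
          have hNu : 0 ≤ normOn a b u (X - Y) := normOn_nonneg hab.le hu.1 (X - Y)
          have hp : ((s' : ℝ) - a) ^ n ≤ (u - a) ^ n :=
            pow_le_pow_left₀ (by linarith [s'.2.1]) (by linarith) n
          calc |(A - B) s'|
              ≤ K ^ n * ((s' : ℝ) - a) ^ n / (n.factorial : ℝ) * normOn a b u (X - Y) :=
                ih X hX Y hY u hu_ab s' hs'
            _ ≤ K ^ n * (u - a) ^ n / (n.factorial : ℝ) * Nv := by
                gcongr <;> first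
                  | exact pow_nonneg hK n
                  | exact div_nonneg (mul_nonneg (pow_nonneg hK n)
                      (pow_nonneg (by linarith [s'.2.1]) n)) (by positivity)
        have := h1.trans (h2.trans (mul_le_mul_of_nonneg_left h3 hK))
        calc |f A ⟨u, hu_ab⟩ - f B ⟨u, hu_ab⟩|
            = |(f A - f B) ⟨u, hu_ab⟩| := by rw [ContinuousMap.sub_apply]
          _ ≤ K * (K ^ n * (u - a) ^ n / (n.factorial : ℝ) * Nv) := this
          _ = K ^ (n + 1) / (n.factorial : ℝ) * Nv * (u - a) ^ n := by ring
      -- integrate the pointwise bound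
      have hg : Continuous (fun u : ℝ => (K ^ (n+1) / (n.factorial : ℝ) * Nv) * (u - a) ^ n) :=
        by continuity
      have hgI : IntervalIntegrable
          (fun u : ℝ => (K ^ (n+1) / (n.factorial : ℝ) * Nv) * (u - a) ^ n) volume a s :=
        hg.intervalIntegrable a s
      have hfac : (0:ℝ) < (n.factorial : ℝ) := by exact_mod_cast n.factorial_pos
      rw [hdiff]
      calc |∫ u in a..(s : ℝ),
              (Set.IccExtend hab.le ⇑(f A) u - Set.IccExtend hab.le ⇑(f B) u)|
          ≤ ∫ u in a..(s : ℝ),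
              |Set.IccExtend hab.le ⇑(f A) u - Set.IccExtend hab.le ⇑(f B) u| := by
            simpa [Real.norm_eq_abs] using
              intervalIntegral.norm_integral_le_integral_norm
                (f := fun u => Set.IccExtend hab.le ⇑(f A) u - Set.IccExtend hab.le ⇑(f B) u)
                (μ := volume) has
        _ ≤ ∫ u in a..(s : ℝ), (K ^ (n+1) / (n.factorial : ℝ) * Nv) * (u - a) ^ n :=
            intervalIntegral.integral_mono_on has ((hI1.sub hI2).abs) hgI hbound
        _ = (K ^ (n+1) / (n.factorial : ℝ) * Nv) * (((s : ℝ) - a) ^ (n+1) / (n+1)) := by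
            rw [intervalIntegral.integral_const_mul]
            congr 1
            rw [intervalIntegral.integral_comp_sub_right (fun x => x ^ n) a]
            simp [integral_pow]
        _ = K ^ (n+1) * ((s : ℝ) - a) ^ (n+1) / ((n+1).factorial : ℝ) * Nv := by
            rw [Nat.factorial_succ]
            push_cast
            field_simp
  intro n hn X hX Y hY t ht
  refine normOn_le hab.le ht.1 _ ?_
  intro s hs
  have hNt : 0 ≤ normOn a b t (X - Y) := normOn_nonneg hab.le ht.1 (X - Y)
  calc |(G^[n] X - G^[n] Y) s|
      ≤ K ^ n * ((s : ℝ) - a) ^ n / (n.factorial : ℝ) * normOn a b t (X - Y) :=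
        key n X hX Y hY t ht s hs
    _ ≤ K ^ n * (t - a) ^ n / (n.factorial : ℝ) * normOn a b t (X - Y) := by
        have hp : ((s : ℝ) - a) ^ n ≤ (t - a) ^ n :=
          pow_le_pow_left₀ (by linarith [s.2.1]) (by linarith) n
        gcongr <;> exact pow_nonneg hK n

end Volterra
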